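/- Let Z' and Z'' be real symmetric n×n matrices with Z'' positive definite. Then the 2n×2n real matrix ℒ = [[Z'' + Z'(Z'')⁻¹Z', Z'(Z'')⁻¹], [(Z'')⁻¹Z', (Z'')⁻¹]] is symmetric and positive definite. -/

import Mathlib

open Matrix

lemma herm_transpose_eq {m : Type*} {A : Matrix m m ℝ} (h : A.IsHermitian) : Aᵀ = A := by
  rw [← conjTranspose_eq_transpose_of_trivial]; exact h

lemma posDef_conj_aux {m : Type*} [Fintype m] [DecidableEq m]
    {M N : Matrix m m ℝ} (hM : M.PosDef) (hN : IsUnit N.det) :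
    (Nᵀ * M * N).PosDef := by
  rw [posDef_iff_dotProduct_mulVec]
  constructor
  · rw [show Nᵀ = Nᴴ from (conjTranspose_eq_transpose_of_trivial N).symm]
    exact isHermitian_conjTranspose_mul_mul N hM.isHermitian
  · intro x hx
    have hNx : N *ᵥ x ≠ 0 := by
      intro h
      apply hx
      have := congrArg (fun v => N⁻¹ *ᵥ v) h
      simpa [Matrix.mulVec_mulVec, Matrix.nonsing_inv_mul _ hN] using this
    have := hM.dotProduct_mulVec_pos hNx
    convert this using 1
    simp only [Matrix.mul_assoc, Matrix.mulVec_mulVec]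
    rw [← Matrix.mulVec_mulVec, dotProduct_mulVec (star x) Nᵀ, star_mulVec]
    simp [vecMul_transpose, dotProduct_mulVec]

lemma posDef_fromBlocks_diag {m : Type*} [Fintype m] [DecidableEq m]
    {A D : Matrix m m ℝ} (hA : A.PosDef) (hD : D.PosDef) :
    (fromBlocks A 0 0 D).PosDef := by
  rw [posDef_iff_dotProduct_mulVec]
  constructor
  · rw [IsHermitian, conjTranspose_eq_transpose_of_trivial]
    simp [fromBlocks_transpose, herm_transpose_eq hA.isHermitian,
      herm_transpose_eq hD.isHermitian]
  · intro x hx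
    have hx' : x = Sum.elim (x ∘ Sum.inl) (x ∘ Sum.inr) := by
      ext (i | i) <;> rfl
    rw [hx', fromBlocks_mulVec]
    simp only [Matrix.zero_mulVec, add_zero, zero_add]
    rw [show star (Sum.elim (x ∘ Sum.inl) (x ∘ Sum.inr))
        = Sum.elim (star (x ∘ Sum.inl)) (star (x ∘ Sum.inr)) by ext (i | i) <;> rfl]
    rw [sumElim_dotProduct_sumElim]
    rcases (by
      by_contra h
      push_neg at h
      apply hx
      ext (i | i)
      · exact congrFun h.1 i
      · exact congrFun h.2 i : x ∘ Sum.inl ≠ 0 ∨ x ∘ Sum.inr ≠ 0) with h | h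
    · exact add_pos_of_pos_of_nonneg (hA.dotProduct_mulVec_pos h) (hD.posSemidef.dotProduct_mulVec_nonneg _)
    · exact add_pos_of_nonneg_of_pos (hA.posSemidef.dotProduct_mulVec_nonneg _) (hD.dotProduct_mulVec_pos h)

/-- If `Z'` and `Z''` are real symmetric matrices with `Z''` positive definite, then
the block matrix `ℒ = [[Z'' + Z' (Z'')⁻¹ Z', Z' (Z'')⁻¹], [(Z'')⁻¹ Z', (Z'')⁻¹]]`
is symmetric and positive definite. -/
theorem L_matrix_posDef {n : ℕ}
    (Z' Z'' : Matrix (Fin n) (Fin n) ℝ)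
    (hZ' : Z'.IsSymm) (hZ''s : Z''.IsSymm) (hZ'' : Z''.PosDef) :
    (fromBlocks (Z'' + Z' * Z''⁻¹ * Z') (Z' * Z''⁻¹) (Z''⁻¹ * Z') Z''⁻¹).IsSymm ∧
    (fromBlocks (Z'' + Z' * Z''⁻¹ * Z') (Z' * Z''⁻¹) (Z''⁻¹ * Z') Z''⁻¹).PosDef := by
  have key : (fromBlocks (Z'' + Z' * Z''⁻¹ * Z') (Z' * Z''⁻¹) (Z''⁻¹ * Z') Z''⁻¹).PosDef := by
    have hfac : fromBlocks (Z'' + Z' * Z''⁻¹ * Z') (Z' * Z''⁻¹) (Z''⁻¹ * Z') Z''⁻¹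
        = (fromBlocks 1 0 Z' 1)ᵀ * fromBlocks Z'' 0 0 Z''⁻¹ * fromBlocks 1 0 Z' 1 := by
      rw [fromBlocks_transpose, Matrix.transpose_one, Matrix.transpose_zero, hZ'.eq,
        fromBlocks_multiply, fromBlocks_multiply]
      simp [Matrix.mul_assoc]
    rw [hfac]
    refine posDef_conj_aux (posDef_fromBlocks_diag hZ'' hZ''.inv) ?_
    rw [det_fromBlocks_zero₁₂]
    simp
  refine ⟨?_, key⟩
  rw [Matrix.IsSymm, herm_transpose_eq key.isHermitian]
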